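/- Let s be a positive integer and H a finite simple graph such that no vertex of H has s distinct neighbors each of degree greater than or equal to its own degree. Then χ(H) ≤ s. -/
import Mathlib

open Finset

/-- Each vertex has fewer than `s` neighbours of degree at least its own. -/
private lemma stmt_9_count {V : Type*} [Fintype V] (H : SimpleGraph V) [DecidableRel H.Adj]
    (s : ℕ)
    (hyp : ∀ v : V, ¬∃ w : Fin s ↪ V,
      ∀ i, H.Adj v (w i) ∧ H.degree v ≤ H.degree (w i)) (v : V) :
    (univ.filter fun w => H.Adj v w ∧ H.degree v ≤ H.degree w).card < s := by
  classical
  by_contra hle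
  push_neg at hle
  set T := univ.filter fun w => H.Adj v w ∧ H.degree v ≤ H.degree w with hT
  have hcard : Fintype.card (Fin s) ≤ Fintype.card {w // w ∈ T} := by
    simpa using hle
  obtain ⟨f⟩ := Function.Embedding.nonempty_of_card_le hcard
  refine hyp v ⟨f.trans (Function.Embedding.subtype _), fun i => ?_⟩
  have := (f i).2
  simp only [hT, mem_filter] at this
  exact this.2

private lemma stmt_9_aux {V : Type*} [Fintype V] (H : SimpleGraph V) [DecidableRel H.Adj]
    (s : ℕ) (hs : 0 < s)
    (hyp : ∀ v : V, ¬∃ w : Fin s ↪ V,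
      ∀ i, H.Adj v (w i) ∧ H.degree v ≤ H.degree (w i)) :
    ∀ S : Finset V, ∃ C : V → Fin s, ∀ u ∈ S, ∀ w ∈ S, H.Adj u w → C u ≠ C w := by
  classical
  intro S
  induction S using Finset.strongInduction with
  | _ S ih =>
    rcases S.eq_empty_or_nonempty with rfl | hne
    · exact ⟨fun _ => ⟨0, hs⟩, by simp⟩
    obtain ⟨v, hvS, hvmin⟩ := Finset.exists_min_image S (fun w => H.degree w) hne
    obtain ⟨C, hC⟩ := ih (S.erase v) (erase_ssubset hvS)
    set Nbrs := (S.erase v).filter (H.Adj v) with hNbrs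
    have hsub : Nbrs ⊆ univ.filter fun w => H.Adj v w ∧ H.degree v ≤ H.degree w := by
      intro w hw
      simp only [hNbrs, mem_filter, mem_erase] at hw
      simp only [mem_filter, mem_univ, true_and]
      exact ⟨hw.2, hvmin w hw.1.2⟩
    have hlt : (Nbrs.image C).card < s := by
      calc (Nbrs.image C).card ≤ Nbrs.card := card_image_le
        _ ≤ _ := card_le_card hsub
        _ < s := stmt_9_count H s hyp v
    have hne' : Nbrs.image C ≠ univ := by
      intro h
      rw [h] at hlt
      simp at hlt
    obtain ⟨c, hc⟩ : ∃ c, c ∉ Nbrs.image C := by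
      by_contra h
      push_neg at h
      exact hne' (eq_univ_iff_forall.2 h)
    refine ⟨Function.update C v c, ?_⟩
    intro u hu w hw hadj
    have hunev : u ≠ w := hadj.ne
    by_cases huv : u = v
    · have hwv : w ≠ v := fun h => hunev (huv.trans h.symm)
      rw [huv, Function.update_self, Function.update_of_ne hwv]
      intro h
      exact hc (h ▸ mem_image_of_mem C (by simp [hNbrs, mem_erase, hwv, hw, huv ▸ hadj]))
    · rw [Function.update_of_ne huv]
      by_cases hwv : w = v
      · rw [hwv, Function.update_self]
        intro h
        exact hc (h.symm ▸ mem_image_of_mem C (by simp [hNbrs, mem_erase, huv, hu, (hwv ▸ hadj).symm]))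
      · rw [Function.update_of_ne hwv]
        exact hC u (mem_erase.2 ⟨huv, hu⟩) w (mem_erase.2 ⟨hwv, hw⟩) hadj

/-- Corollary 2.9: if no vertex of a finite graph `H` has `s` distinct neighbours each
of degree at least its own, then `χ(H) ≤ s`. -/
theorem stmt_9 {V : Type*} [Fintype V] (H : SimpleGraph V) [DecidableRel H.Adj]
    (s : ℕ) (hs : 0 < s)
    (hyp : ∀ v : V, ¬∃ w : Fin s ↪ V,
      ∀ i, H.Adj v (w i) ∧ H.degree v ≤ H.degree (w i)) :
    H.chromaticNumber ≤ s := by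
  obtain ⟨C, hC⟩ := stmt_9_aux H s hs hyp Finset.univ
  have : H.Colorable s :=
    ⟨SimpleGraph.Coloring.mk C fun hadj => hC _ (Finset.mem_univ _) _ (Finset.mem_univ _) hadj⟩
  exact this.chromaticNumber_le
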